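/- Kantorovich's inequality: for a symmetric positive definite matrix A with smallest eigenvalue λ_min and largest eigenvalue λ_max, and any nonzero vector x, (xᵀx)² / ((xᵀAx)(xᵀA⁻¹x)) ≥ 4 λ_min λ_max / (λ_min + λ_max)². -/

import Mathlib

open Matrix

private lemma quadform_diag {d : ℕ} (U : Matrix (Fin d) (Fin d) ℝ) (w x : Fin d → ℝ) :
    dotProduct x ((U * Matrix.diagonal w * Uᵀ).mulVec x)
      = ∑ i, w i * (Uᵀ.mulVec x i) ^ 2 := by
  rw [← Matrix.mulVec_mulVec, ← Matrix.mulVec_mulVec, dotProduct_mulVec x U,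
    ← Matrix.mulVec_transpose]
  simp [Matrix.mulVec_diagonal, dotProduct, sq, mul_left_comm, mul_comm]

theorem stmt_5 {d : ℕ} (A : Matrix (Fin d) (Fin d) ℝ)
    (hA : A.IsHermitian) (hpd : A.PosDef)
    (lmin lmax : ℝ)
    (hmin : IsLeast (Set.range hA.eigenvalues) lmin)
    (hmax : IsGreatest (Set.range hA.eigenvalues) lmax)
    (x : Fin d → ℝ) (hx : x ≠ 0) :
    (dotProduct x x) ^ 2 /
      ((dotProduct x (A.mulVec x)) * (dotProduct x (A⁻¹.mulVec x))) ≥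
      4 * lmin * lmax / (lmin + lmax) ^ 2 := by
  set U : Matrix (Fin d) (Fin d) ℝ := (hA.eigenvectorUnitary : Matrix (Fin d) (Fin d) ℝ) with hUdef
  set w : Fin d → ℝ := hA.eigenvalues with hwdef
  have hw_pos : ∀ i, 0 < w i := fun i => hpd.eigenvalues_pos i
  have hUtU : Uᵀ * U = 1 := by
    have h := hA.eigenvectorUnitary.2.1
    rwa [Matrix.star_eq_conjTranspose, Matrix.conjTranspose_eq_transpose_of_trivial] at h
  have hUUt : U * Uᵀ = 1 := by
    have h := hA.eigenvectorUnitary.2.2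
    rwa [Matrix.star_eq_conjTranspose, Matrix.conjTranspose_eq_transpose_of_trivial] at h
  have hAs : A = U * Matrix.diagonal w * Uᵀ := by
    have := hA.spectral_theorem
    simp at this
    rw [Matrix.star_eq_conjTranspose, Matrix.conjTranspose_eq_transpose_of_trivial] at this
    exact this
  have hAinv : A⁻¹ = U * Matrix.diagonal w⁻¹ * Uᵀ := by
    apply Matrix.inv_eq_right_inv
    rw [hAs]
    have : Matrix.diagonal w * (Matrix.diagonal w⁻¹) = 1 := by
      rw [Matrix.diagonal_mul_diagonal]
      convert Matrix.diagonal_one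
      exact mul_inv_cancel₀ (hw_pos _).ne'
    calc U * Matrix.diagonal w * Uᵀ * (U * Matrix.diagonal w⁻¹ * Uᵀ)
        = U * Matrix.diagonal w * (Uᵀ * U) * Matrix.diagonal w⁻¹ * Uᵀ := by
          noncomm_ring
      _ = U * (Matrix.diagonal w * Matrix.diagonal w⁻¹) * Uᵀ := by
          rw [hUtU, mul_one]; noncomm_ring
      _ = 1 := by rw [this, mul_one, hUUt]
  set y : Fin d → ℝ := Uᵀ.mulVec x with hydef
  have hxA : dotProduct x (A.mulVec x) = ∑ i, w i * y i ^ 2 := by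
    rw [hAs]; exact quadform_diag U w x
  have hxAinv : dotProduct x (A⁻¹.mulVec x) = ∑ i, (w i)⁻¹ * y i ^ 2 := by
    rw [hAinv]; exact quadform_diag U w⁻¹ x
  have hxx : dotProduct x x = ∑ i, y i ^ 2 := by
    have h := quadform_diag U (fun _ => (1:ℝ)) x
    rw [Matrix.diagonal_one, mul_one, hUUt, Matrix.one_mulVec] at h
    simpa using h
  -- positivity facts
  obtain ⟨i0, hi0⟩ := hmin.1
  have hlmin_pos : 0 < lmin := hi0 ▸ hw_pos i0
  have hlmax_pos : 0 < lmax := by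
    obtain ⟨i1, hi1⟩ := hmax.1
    exact hi1 ▸ hw_pos i1
  have hwlb : ∀ i, lmin ≤ w i := fun i => hmin.2 ⟨i, rfl⟩
  have hwub : ∀ i, w i ≤ lmax := fun i => hmax.2 ⟨i, rfl⟩
  have hy : y ≠ 0 := by
    intro hy0
    apply hx
    have : x = U.mulVec y := by
      rw [hydef, Matrix.mulVec_mulVec, hUUt, Matrix.one_mulVec]
    rw [this, hy0, Matrix.mulVec_zero]
  set S : ℝ := ∑ i, y i ^ 2 with hSdef
  set t : ℝ := ∑ i, w i * y i ^ 2 with htdef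
  set s : ℝ := ∑ i, (w i)⁻¹ * y i ^ 2 with hsdef
  have hS_pos : 0 < S := by
    rcases Function.ne_iff.mp hy with ⟨j, hj⟩
    exact Finset.sum_pos' (fun i _ => sq_nonneg _)
      ⟨j, Finset.mem_univ j, lt_of_le_of_ne (sq_nonneg _) (Ne.symm (pow_ne_zero 2 hj))⟩
  have ht_lb : lmin * S ≤ t := by
    rw [htdef, hSdef, Finset.mul_sum]
    exact Finset.sum_le_sum fun i _ => by nlinarith [sq_nonneg (y i), hwlb i]
  have ht_pos : 0 < t := lt_of_lt_of_le (by positivity) ht_lb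
  have hs_pos : 0 < s := by
    have : lmax⁻¹ * S ≤ s := by
      rw [hsdef, hSdef, Finset.mul_sum]
      refine Finset.sum_le_sum fun i _ => ?_
      have := hwub i
      have hwi := hw_pos i
      have : lmax⁻¹ ≤ (w i)⁻¹ := by
        apply inv_anti₀ hwi this
      nlinarith [sq_nonneg (y i)]
    exact lt_of_lt_of_le (by positivity) this
  have hs_ub : lmin * lmax * s ≤ (lmin + lmax) * S - t := by
    have key : ∀ i, lmin * lmax * ((w i)⁻¹ * y i ^ 2)
        ≤ (lmin + lmax) * y i ^ 2 - w i * y i ^ 2 := by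
      intro i
      have hwi := hw_pos i
      have h1 : lmin * lmax * (w i)⁻¹ ≤ lmin + lmax - w i := by
        rw [← div_eq_mul_inv, div_le_iff₀ hwi]
        nlinarith [hwlb i, hwub i]
      calc lmin * lmax * ((w i)⁻¹ * y i ^ 2) = (lmin * lmax * (w i)⁻¹) * y i ^ 2 := by ring
        _ ≤ (lmin + lmax - w i) * y i ^ 2 := mul_le_mul_of_nonneg_right h1 (sq_nonneg _)
        _ = (lmin + lmax) * y i ^ 2 - w i * y i ^ 2 := by ring
    calc lmin * lmax * s = ∑ i, lmin * lmax * ((w i)⁻¹ * y i ^ 2) := by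
          rw [hsdef, Finset.mul_sum]
      _ ≤ ∑ i, ((lmin + lmax) * y i ^ 2 - w i * y i ^ 2) := Finset.sum_le_sum fun i _ => key i
      _ = (lmin + lmax) * S - t := by
          rw [Finset.sum_sub_distrib, hSdef, htdef, Finset.mul_sum]
  have hts : t * s ≤ (lmin + lmax) ^ 2 * S ^ 2 / (4 * lmin * lmax) := by
    rw [le_div_iff₀ (by positivity)]
    nlinarith [sq_nonneg ((lmin + lmax) * S - 2 * t), mul_le_mul_of_nonneg_left hs_ub ht_pos.le]
  rw [hxx, hxA, hxAinv, ge_iff_le,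
    div_le_div_iff₀ (by positivity) (by positivity : (0:ℝ) < t * s)]
  have h4 : 0 < 4 * lmin * lmax := by positivity
  rw [le_div_iff₀ h4] at hts
  nlinarith [hts]
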